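/- Let D be a finite distributive lattice graded by the rank function r (the height function), and let L = {x ∈ D : r(x) = i} and U = {x ∈ D : r(x) = j} be levels of D with i < j. Let a ∈ L and let b, c ∈ U with b ≠ c. Suppose there exist x, y ∈ D with a < x < b and a < y < c, such that x is incomparable to every element of (L ∪ U) \ {a, b} and y is incomparable to every element of (L ∪ U) \ {a, c}. Then L = {a}. -/
import Mathlib


/-- **Lemma (unique intervals).** Let `D` be a finite distributive lattice graded by
the rank function `r`, with levels `L` (rank `i`) and `U` (rank `j`), `i < j`.
Let `a ∈ L`, `b, c ∈ U` with `b ≠ c`, and suppose there are `x, y` with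
`a < x < b`, `a < y < c`, `x` incomparable to every element of `(L ∪ U) \ {a, b}`,
and `y` incomparable to every element of `(L ∪ U) \ {a, c}`. Then `L = {a}`. -/
theorem stmt9 {D : Type*} [DistribLattice D] [Fintype D] [BoundedOrder D]
    (r : D → ℕ) (hr0 : r ⊥ = 0) (hrcov : ∀ x y : D, x ⋖ y → r y = r x + 1)
    (i j : ℕ) (hij : i < j)
    (L U : Set D) (hL : L = {x : D | r x = i}) (hU : U = {x : D | r x = j})
    (a : D) (ha : a ∈ L) (b c : D) (hb : b ∈ U) (hc : c ∈ U) (hbc : b ≠ c)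
    (x y : D) (hax : a < x) (hxb : x < b) (hay : a < y) (hyc : y < c)
    (hx : ∀ v ∈ (L ∪ U) \ {a, b}, ¬ x ≤ v ∧ ¬ v ≤ x)
    (hy : ∀ w ∈ (L ∪ U) \ {a, c}, ¬ y ≤ w ∧ ¬ w ≤ y) :
    L = {a} := by
  -- basic graded-lattice facts
  have cover : ∀ u v : D, u < v → ∃ w, u ⋖ w ∧ w ≤ v := by
    intro u v huv
    obtain ⟨m, hm, hmin⟩ := (wellFounded_lt (α := D)).has_min {w | u < w ∧ w ≤ v} ⟨v, huv, le_rfl⟩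
    exact ⟨m, ⟨hm.1, fun t ht1 ht2 => hmin t ⟨ht1, ht2.le.trans hm.2⟩ ht2⟩, hm.2⟩
  have smono : ∀ u v : D, u < v → r u < r v := by
    intro u
    induction u using WellFoundedGT.induction with
    | _ u ih =>
      intro v huv
      obtain ⟨w, hw, hwv⟩ := cover u v huv
      have hrw := hrcov u w hw
      rcases eq_or_lt_of_le hwv with rfl | hlt
      · omega
      · have := ih w hw.lt v hlt; omega
  have mono : ∀ u v : D, u ≤ v → r u ≤ r v := by
    intro u v huv
    rcases eq_or_lt_of_le huv with rfl | h
    · exact le_rfl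
    · exact (smono u v h).le
  have ivt : ∀ u : D, ∀ v : D, u ≤ v → ∀ k, r u ≤ k → k ≤ r v → ∃ e, u ≤ e ∧ e ≤ v ∧ r e = k := by
    intro u
    induction u using WellFoundedGT.induction with
    | _ u ih =>
      intro v huv k hk1 hk2
      rcases eq_or_lt_of_le hk1 with heq | hlt
      · exact ⟨u, le_rfl, huv, heq⟩
      · have huv' : u < v := by
          rcases eq_or_lt_of_le huv with rfl | h
          · omega
          · exact h
        obtain ⟨w, hw, hwv⟩ := cover u v huv'
        have hrw := hrcov u w hw
        obtain ⟨e, he1, he2, he3⟩ := ih w hw.lt v hwv k (by omega) hk2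
        exact ⟨e, hw.le.trans he1, he2, he3⟩
  subst hL hU
  have hra : r a = i := ha
  have hrb : r b = j := hb
  have hrc : r c = j := hc
  have hrx : i < r x := hra ▸ smono a x hax
  have hry : i < r y := hra ▸ smono a y hay
  have hryj : r y < j := hrc ▸ smono y c hyc
  -- any rank-j element above y is c
  have F2y : ∀ e : D, r e = j → y ≤ e → e = c := by
    intro e hej hye
    by_contra hne
    have hea : e ≠ a := by rintro rfl; omega
    have := (hy e ⟨Or.inr hej, by simp [hea, hne]⟩).1
    exact this hye
  -- any rank-i element below x is a, and similarly for y
  have F3x : ∀ u : D, u ≤ x → r u ≤ i → u ≤ a := by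
    intro u hux hui
    obtain ⟨e, he1, he2, he3⟩ := ivt u x hux i hui hrx.le
    have heb : e ≠ b := by rintro rfl; omega
    by_cases hea : e = a
    · exact hea ▸ he1
    · exact absurd he2 (hx e ⟨Or.inl he3, by simp [hea, heb]⟩).2.elim
  have F3y : ∀ u : D, u ≤ y → r u ≤ i → u ≤ a := by
    intro u huy hui
    obtain ⟨e, he1, he2, he3⟩ := ivt u y huy i hui hry.le
    have hec : e ≠ c := by rintro rfl; omega
    by_cases hea : e = a
    · exact hea ▸ he1
    · exact absurd he2 (hy e ⟨Or.inl he3, by simp [hea, hec]⟩).2.elim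
  -- key lemma: anything not below c joins with y above c
  have H4 : ∀ z : D, ¬ z ≤ c → c ≤ y ⊔ z := by
    intro z hz
    by_cases hcase : j ≤ r (y ⊔ z)
    · obtain ⟨e, hye, hez, hej⟩ := ivt y (y ⊔ z) le_sup_left j hryj.le hcase
      exact (F2y e hej hye) ▸ hez
    · push_neg at hcase
      have hcz : j ≤ r (c ⊔ z) := hrc ▸ mono c (c ⊔ z) le_sup_left
      obtain ⟨e, h1, h2, h3⟩ :=
        ivt (y ⊔ z) (c ⊔ z) (sup_le_sup_right hyc.le z) j hcase.le hcz
      have : e = c := F2y e h3 (le_sup_left.trans h1)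
      exact absurd ((le_sup_right.trans h1).trans (this ▸ le_rfl)) hz
  -- main argument
  ext d
  simp only [Set.mem_setOf_eq, Set.mem_singleton_iff]
  constructor
  · intro hd
    by_contra hda
    have hdb : d ≠ b := by rintro rfl; omega
    have hdc : d ≠ c := by rintro rfl; omega
    have hxd := hx d ⟨Or.inl hd, by simp [hda, hdb]⟩
    have hyd := hy d ⟨Or.inl hd, by simp [hda, hdc]⟩
    -- d ⊓ x ≤ a
    have hdx_lt : d ⊓ x < d := lt_of_le_of_ne inf_le_left (fun h => hxd.2 (inf_eq_left.mp h))
    have hdxa : d ⊓ x ≤ a := F3x (d ⊓ x) inf_le_right (by have := smono _ _ hdx_lt; omega)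
    have hdy_lt : d ⊓ y < d := lt_of_le_of_ne inf_le_left (fun h => hyd.2 (inf_eq_left.mp h))
    have hdya : d ⊓ y ≤ a := F3y (d ⊓ y) inf_le_right (by have := smono _ _ hdy_lt; omega)
    -- d ⊓ c is not below y
    have hkey : ¬ d ⊓ c ≤ y := by
      intro hdc'
      have h1 : d ⊓ c ≤ a := le_trans (le_inf inf_le_left hdc') hdya
      by_cases hdlec : d ≤ c
      · have : d ≤ a := (inf_eq_left.mpr hdlec) ▸ h1
        rcases eq_or_lt_of_le this with heq | hlt
        · exact hda heq
        · have := smono d a hlt; omega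
      · have hcyd : c ≤ y ⊔ d := H4 d hdlec
        have : c ≤ y := by
          have hc1 : c = c ⊓ (y ⊔ d) := (inf_eq_left.mpr hcyd).symm
          rw [hc1, inf_sup_left]
          exact sup_le inf_le_right (le_trans (by rw [inf_comm]; exact h1) hay.le)
        exact absurd this (not_le_of_gt hyc)
    -- but x ≰ c forces c ≤ y ⊔ x, and then d ⊓ c ≤ y
    have hca : c ≠ a := by rintro rfl; omega
    have hxc : ¬ x ≤ c := (hx c ⟨Or.inr hrc, by simp [hca, hbc.symm]⟩).1
    have hcyx : c ≤ y ⊔ x := H4 x hxc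
    apply hkey
    calc d ⊓ c ≤ d ⊓ (y ⊔ x) := inf_le_inf_left d hcyx
      _ = (d ⊓ y) ⊔ (d ⊓ x) := inf_sup_left d y x
      _ ≤ y := sup_le inf_le_right (hdxa.trans hay.le)
  · rintro rfl
    exact hra
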